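/- Let A be an m×n complex matrix (m ≥ n) whose associated linear map is injective, and let A⁺ = (Aᴴ A)⁻¹ Aᴴ be its Moore–Penrose left inverse. Let k be a positive natural number, let ψ be a nonzero vector in ℂ^(Fin k × Fin n), and let ω = (1 ⊗ₖ A) ψ / ‖(1 ⊗ₖ A) ψ‖ ∈ ℂ^(Fin k × Fin m), a unit vector in the range of 1 ⊗ₖ A. Let O be any k×k complex matrix and set P = (A⁺)ᴴ A⁺ (an m×m matrix). Suppose the clustering bound |⟨ω, (O ⊗ₖ P) ω⟩ − ⟨ω, (O ⊗ₖ 1_m) ω⟩ · ⟨ω, (1_k ⊗ₖ P) ω⟩| ≤ ε · ‖O‖ · ‖P‖ holds for some ε ≥ 0. Then, with ω' = (1 ⊗ₖ A⁺) ω / ‖(1 ⊗ₖ A⁺) ω‖ ∈ ℂ^(Fin k × Fin n), one has ω' = ψ/‖ψ‖ and |⟨ω', (O ⊗ₖ 1_n) ω'⟩ − ⟨ω, (O ⊗ₖ 1_m) ω⟩| ≤ ε · ‖O‖ · (‖A‖ · ‖A⁺‖)². -/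

import Mathlib

open Matrix
open scoped Kronecker ComplexInnerProductSpace

/-- The `ℓ² → ℓ²` operator norm of a complex matrix. -/
noncomputable def l2opNorm {m n : Type*} [Fintype m] [Fintype n] [DecidableEq n]
    (M : Matrix m n ℂ) : ℝ :=
  ‖LinearMap.toContinuousLinearMap (Matrix.toEuclideanLin M)‖

set_option linter.unusedSectionVars false

section Aux
variable {a b c : Type*} [Fintype a] [Fintype b] [Fintype c] [DecidableEq a] [DecidableEq b] [DecidableEq c]

open scoped Matrix.Norms.L2Operator in
lemma l2opNorm_eq (M : Matrix a b ℂ) : l2opNorm M = ‖M‖ := rfl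

open scoped Matrix.Norms.L2Operator in
lemma l2opNorm_conjT_mul_self (M : Matrix a b ℂ) :
    l2opNorm (Mᴴ * M) = l2opNorm M * l2opNorm M := by
  rw [l2opNorm_eq, l2opNorm_eq]; exact Matrix.l2_opNorm_conjTranspose_mul_self M

lemma l2opNorm_nonneg (M : Matrix a b ℂ) : 0 ≤ l2opNorm M :=
  norm_nonneg _

lemma norm_toEuclideanLin_apply_le (M : Matrix a b ℂ)
    (x : EuclideanSpace ℂ b) : ‖toEuclideanLin M x‖ ≤ l2opNorm M * ‖x‖ :=
  (LinearMap.toContinuousLinearMap (toEuclideanLin M)).le_opNorm x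

lemma toEuclideanLin_mul_apply (M : Matrix a b ℂ) (N : Matrix b c ℂ)
    (x : EuclideanSpace ℂ c) :
    toEuclideanLin (M * N) x = toEuclideanLin M (toEuclideanLin N x) := by
  simp [Matrix.toEuclideanLin_apply, Matrix.mulVec_mulVec]

lemma toEuclideanLin_one_apply (x : EuclideanSpace ℂ a) :
    toEuclideanLin (1 : Matrix a a ℂ) x = x := by
  simp [Matrix.toEuclideanLin_apply]

lemma inner_toEuclideanLin_conjT (M : Matrix a b ℂ)
    (x : EuclideanSpace ℂ b) (y : EuclideanSpace ℂ a) :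
    ⟪x, toEuclideanLin Mᴴ y⟫ = ⟪toEuclideanLin M x, y⟫ := by
  rw [Matrix.toEuclideanLin_conjTranspose_eq_adjoint]
  exact LinearMap.adjoint_inner_right _ x y

lemma kron_one_conjT {k : ℕ} (M : Matrix a b ℂ) :
    ((1 : Matrix (Fin k) (Fin k) ℂ) ⊗ₖ M)ᴴ = (1 : Matrix (Fin k) (Fin k) ℂ) ⊗ₖ Mᴴ := by
  ext ⟨i, j⟩ ⟨i', j'⟩
  by_cases h : i = i' <;>
    simp [Matrix.conjTranspose_apply, Matrix.one_apply, h, eq_comm]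

lemma euclid_norm_sq {ι : Type*} [Fintype ι] (x : EuclideanSpace ℂ ι) :
    ‖x‖ ^ 2 = ∑ i, ‖x i‖ ^ 2 := by
  rw [EuclideanSpace.norm_eq, Real.sq_sqrt (by positivity)]

end Aux

lemma toEuclideanLin_kron_one_apply {k : ℕ} {a b : Type*} [Fintype a] [Fintype b]
    [DecidableEq a] [DecidableEq b] (M : Matrix a b ℂ)
    (x : EuclideanSpace ℂ (Fin k × b)) (i : Fin k) (j : a) :
    toEuclideanLin ((1 : Matrix (Fin k) (Fin k) ℂ) ⊗ₖ M) x (i, j)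
      = toEuclideanLin M ((EuclideanSpace.equiv b ℂ).symm fun j' => x (i, j')) j := by
  simp [Matrix.toEuclideanLin_apply, Matrix.mulVec, dotProduct, Fintype.sum_prod_type,
    Matrix.one_apply, ite_mul, Finset.sum_ite_eq, mul_assoc]

lemma norm_toEuclideanLin_kron_one_le {k : ℕ} {a b : Type*} [Fintype a] [Fintype b]
    [DecidableEq a] [DecidableEq b] (M : Matrix a b ℂ)
    (x : EuclideanSpace ℂ (Fin k × b)) :
    ‖toEuclideanLin ((1 : Matrix (Fin k) (Fin k) ℂ) ⊗ₖ M) x‖ ≤ l2opNorm M * ‖x‖ := by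
  have hC : 0 ≤ l2opNorm M * ‖x‖ := mul_nonneg (l2opNorm_nonneg M) (norm_nonneg _)
  have hsq : ‖toEuclideanLin ((1 : Matrix (Fin k) (Fin k) ℂ) ⊗ₖ M) x‖ ^ 2
      ≤ (l2opNorm M * ‖x‖) ^ 2 := by
    rw [euclid_norm_sq, Fintype.sum_prod_type]
    have key : ∀ i : Fin k,
        ∑ j : a, ‖toEuclideanLin ((1 : Matrix (Fin k) (Fin k) ℂ) ⊗ₖ M) x (i, j)‖ ^ 2
          ≤ l2opNorm M ^ 2 * ∑ j' : b, ‖x (i, j')‖ ^ 2 := by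
      intro i
      have h1 : ∑ j : a, ‖toEuclideanLin ((1 : Matrix (Fin k) (Fin k) ℂ) ⊗ₖ M) x (i, j)‖ ^ 2
          = ‖toEuclideanLin M ((EuclideanSpace.equiv b ℂ).symm fun j' => x (i, j'))‖ ^ 2 := by
        rw [euclid_norm_sq]
        exact Finset.sum_congr rfl fun j _ => by rw [toEuclideanLin_kron_one_apply]
      rw [h1]
      have h2 := norm_toEuclideanLin_apply_le M ((EuclideanSpace.equiv b ℂ).symm fun j' => x (i, j'))
      have h3 : ‖(EuclideanSpace.equiv b ℂ).symm fun j' => x (i, j')‖ ^ 2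
          = ∑ j' : b, ‖x (i, j')‖ ^ 2 := by
        rw [euclid_norm_sq]; rfl
      calc ‖toEuclideanLin M ((EuclideanSpace.equiv b ℂ).symm fun j' => x (i, j'))‖ ^ 2
          ≤ (l2opNorm M * ‖(EuclideanSpace.equiv b ℂ).symm fun j' => x (i, j')‖) ^ 2 := by
            apply pow_le_pow_left₀ (norm_nonneg _) h2
        _ = l2opNorm M ^ 2 * ∑ j' : b, ‖x (i, j')‖ ^ 2 := by rw [mul_pow, h3]
    calc ∑ i : Fin k, ∑ j : a, ‖toEuclideanLin ((1 : Matrix (Fin k) (Fin k) ℂ) ⊗ₖ M) x (i, j)‖ ^ 2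
        ≤ ∑ i : Fin k, l2opNorm M ^ 2 * ∑ j' : b, ‖x (i, j')‖ ^ 2 :=
          Finset.sum_le_sum fun i _ => key i
      _ = (l2opNorm M * ‖x‖) ^ 2 := by
          rw [← Finset.mul_sum, mul_pow, euclid_norm_sq, Fintype.sum_prod_type]
  have := Real.sqrt_le_sqrt hsq
  rwa [Real.sqrt_sq (norm_nonneg _), Real.sqrt_sq hC] at this

lemma inner_real_smul_map {ι : Type*} [Fintype ι] [DecidableEq ι] (M : Matrix ι ι ℂ)
    (r : ℝ) (x : EuclideanSpace ℂ ι) :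
    ⟪r • x, toEuclideanLin M (r • x)⟫ = ((r : ℂ)) ^ 2 * ⟪x, toEuclideanLin M x⟫ := by
  rw [RCLike.real_smul_eq_coe_smul (K := ℂ) r x, _root_.map_smul,
    inner_smul_left, inner_smul_right, RCLike.conj_ofReal]
  ring_nf
  exact (mul_comm _ _)

open scoped ComplexOrder in
lemma aux_isUnit_conjT_mul_self {m n : ℕ} (A : Matrix (Fin m) (Fin n) ℂ)
    (hA : Function.Injective A.mulVec) : IsUnit (Aᴴ * A) := by
  rw [← Matrix.mulVec_injective_iff_isUnit]
  intro u w huw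
  have h0 : (Aᴴ * A) *ᵥ (u - w) = 0 := by
    rw [Matrix.mulVec_sub, huw, sub_self]
  have h1 : A *ᵥ (u - w) = A *ᵥ 0 := by
    rw [(Matrix.conjTranspose_mul_self_mulVec_eq_zero A _).mp h0, Matrix.mulVec_zero]
  exact sub_eq_zero.mp (hA h1)


set_option maxHeartbeats 1000000 in
theorem per_step_disentangling_bound_rectangular (m n k : ℕ) (hk : 0 < k) (hmn : n ≤ m)
    (A : Matrix (Fin m) (Fin n) ℂ) (hA : Function.Injective A.mulVec)
    (Ap : Matrix (Fin n) (Fin m) ℂ) (hAp : Ap = (Aᴴ * A)⁻¹ * Aᴴ)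
    (ψ : EuclideanSpace ℂ (Fin k × Fin n)) (hψ : ψ ≠ 0)
    (ω : EuclideanSpace ℂ (Fin k × Fin m))
    (hω : ω = ‖toEuclideanLin ((1 : Matrix (Fin k) (Fin k) ℂ) ⊗ₖ A) ψ‖⁻¹ •
               toEuclideanLin ((1 : Matrix (Fin k) (Fin k) ℂ) ⊗ₖ A) ψ)
    (O : Matrix (Fin k) (Fin k) ℂ)
    (P : Matrix (Fin m) (Fin m) ℂ) (hP : P = Apᴴ * Ap)
    (ε : ℝ) (hε : 0 ≤ ε)
    (hcluster :
      ‖(⟪ω, toEuclideanLin (O ⊗ₖ P) ω⟫ -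
          ⟪ω, toEuclideanLin (O ⊗ₖ (1 : Matrix (Fin m) (Fin m) ℂ)) ω⟫ *
          ⟪ω, toEuclideanLin ((1 : Matrix (Fin k) (Fin k) ℂ) ⊗ₖ P) ω⟫)‖ ≤
        ε * l2opNorm O * l2opNorm P)
    (ω' : EuclideanSpace ℂ (Fin k × Fin n))
    (hω' : ω' = ‖toEuclideanLin ((1 : Matrix (Fin k) (Fin k) ℂ) ⊗ₖ Ap) ω‖⁻¹ •
                 toEuclideanLin ((1 : Matrix (Fin k) (Fin k) ℂ) ⊗ₖ Ap) ω) :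
    ω' = ‖ψ‖⁻¹ • ψ ∧
    ‖(⟪ω', toEuclideanLin (O ⊗ₖ (1 : Matrix (Fin n) (Fin n) ℂ)) ω'⟫ -
        ⟪ω, toEuclideanLin (O ⊗ₖ (1 : Matrix (Fin m) (Fin m) ℂ)) ω⟫)‖ ≤
      ε * l2opNorm O * (l2opNorm A * l2opNorm Ap) ^ 2 := by
  classical
  -- `Aᴴ * A` is invertible, hence `Ap` is a left inverse of `A`
  have hunit : IsUnit (Aᴴ * A) := aux_isUnit_conjT_mul_self A hA
  have hApA : Ap * A = 1 := by
    rw [hAp, Matrix.mul_assoc]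
    exact Matrix.nonsing_inv_mul _ ((Matrix.isUnit_iff_isUnit_det _).mp hunit)
  have hAAp : Aᴴ * Apᴴ = 1 := by
    rw [← Matrix.conjTranspose_mul, hApA, Matrix.conjTranspose_one]
  have hAPA : Aᴴ * (P * A) = 1 := by
    rw [hP, Matrix.mul_assoc Apᴴ Ap A, ← Matrix.mul_assoc Aᴴ Apᴴ (Ap * A), hAAp,
      Matrix.one_mul, hApA]
  -- Kronecker identities
  have kron1 : ((1 : Matrix (Fin k) (Fin k) ℂ) ⊗ₖ Aᴴ) *
      ((O ⊗ₖ P) * ((1 : Matrix (Fin k) (Fin k) ℂ) ⊗ₖ A)) =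
      O ⊗ₖ (1 : Matrix (Fin n) (Fin n) ℂ) := by
    rw [← Matrix.mul_kronecker_mul, ← Matrix.mul_kronecker_mul, Matrix.mul_one,
      Matrix.one_mul, ← Matrix.mul_assoc Aᴴ P A, Matrix.mul_assoc Aᴴ P A, hAPA]
  have kron2 : ((1 : Matrix (Fin k) (Fin k) ℂ) ⊗ₖ Aᴴ) *
      (((1 : Matrix (Fin k) (Fin k) ℂ) ⊗ₖ P) * ((1 : Matrix (Fin k) (Fin k) ℂ) ⊗ₖ A)) =
      (1 : Matrix (Fin k × Fin n) (Fin k × Fin n) ℂ) := by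
    rw [← Matrix.mul_kronecker_mul, ← Matrix.mul_kronecker_mul, hAPA, Matrix.one_mul,
      Matrix.one_mul, Matrix.one_kronecker_one]
  have kronApA : ((1 : Matrix (Fin k) (Fin k) ℂ) ⊗ₖ Ap) *
      ((1 : Matrix (Fin k) (Fin k) ℂ) ⊗ₖ A) = 1 := by
    rw [← Matrix.mul_kronecker_mul, hApA, Matrix.one_mul, Matrix.one_kronecker_one]
  set B := toEuclideanLin ((1 : Matrix (Fin k) (Fin k) ℂ) ⊗ₖ A) with hBdef
  have key : ∀ (M : Matrix (Fin k × Fin m) (Fin k × Fin m) ℂ)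
      (u v : EuclideanSpace ℂ (Fin k × Fin n)),
      ⟪B u, toEuclideanLin M (B v)⟫ =
        ⟪u, toEuclideanLin (((1 : Matrix (Fin k) (Fin k) ℂ) ⊗ₖ Aᴴ) *
          (M * ((1 : Matrix (Fin k) (Fin k) ℂ) ⊗ₖ A))) v⟫ := by
    intro M u v
    rw [toEuclideanLin_mul_apply, ← kron_one_conjT, inner_toEuclideanLin_conjT,
      toEuclideanLin_mul_apply]
  set c := ‖B ψ‖ with hcdef
  have hBψ : toEuclideanLin ((1 : Matrix (Fin k) (Fin k) ℂ) ⊗ₖ Ap) (B ψ) = ψ := by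
    rw [← toEuclideanLin_mul_apply, kronApA, toEuclideanLin_one_apply]
  have hc0 : 0 < c := by
    rw [hcdef, norm_pos_iff]
    intro h
    exact hψ (by rw [← hBψ, h, map_zero])
  have hs0 : (0 : ℝ) < ‖ψ‖ := norm_pos_iff.mpr hψ
  -- the first conjunct
  have hω'eq : ω' = ‖ψ‖⁻¹ • ψ := by
    have h1 : toEuclideanLin ((1 : Matrix (Fin k) (Fin k) ℂ) ⊗ₖ Ap) ω = c⁻¹ • ψ := by
      rw [hω, LinearMap.map_smul_of_tower, hBψ]
    rw [hω', h1, norm_smul, Real.norm_eq_abs, abs_of_pos (inv_pos.mpr hc0), smul_smul]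
    congr 1
    field_simp
  refine ⟨hω'eq, ?_⟩
  -- rewrite the three expectation values
  have hsm : ∀ (M : Matrix (Fin k × Fin m) (Fin k × Fin m) ℂ),
      ⟪ω, toEuclideanLin M ω⟫ = ((c : ℂ))⁻¹ ^ 2 * ⟪B ψ, toEuclideanLin M (B ψ)⟫ := by
    intro M
    rw [hω, inner_real_smul_map, Complex.ofReal_inv]
  have hX1 : ⟪ω, toEuclideanLin (O ⊗ₖ P) ω⟫ =
      ((c : ℂ))⁻¹ ^ 2 * ⟪ψ, toEuclideanLin (O ⊗ₖ (1 : Matrix (Fin n) (Fin n) ℂ)) ψ⟫ := by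
    rw [hsm, key, kron1]
  have hX2 : ⟪ω, toEuclideanLin ((1 : Matrix (Fin k) (Fin k) ℂ) ⊗ₖ P) ω⟫ =
      ((c : ℂ))⁻¹ ^ 2 * ((‖ψ‖ : ℂ)) ^ 2 := by
    rw [hsm, key, kron2, toEuclideanLin_one_apply, inner_self_eq_norm_sq_to_K]
    rfl
  have hX3 : ⟪ω', toEuclideanLin (O ⊗ₖ (1 : Matrix (Fin n) (Fin n) ℂ)) ω'⟫ =
      ((‖ψ‖ : ℂ))⁻¹ ^ 2 * ⟪ψ, toEuclideanLin (O ⊗ₖ (1 : Matrix (Fin n) (Fin n) ℂ)) ψ⟫ := by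
    rw [hω'eq, inner_real_smul_map, Complex.ofReal_inv]
  set X := ⟪ψ, toEuclideanLin (O ⊗ₖ (1 : Matrix (Fin n) (Fin n) ℂ)) ψ⟫ with hXdef
  set q := ⟪ω, toEuclideanLin (O ⊗ₖ (1 : Matrix (Fin m) (Fin m) ℂ)) ω⟫ with hqdef
  set s := ‖ψ‖ with hsdef
  rw [hX1, hX2] at hcluster
  rw [hX3]
  set NO := l2opNorm O with hNOdef
  set NA := l2opNorm A with hNAdef
  set NAp := l2opNorm Ap with hNApdef
  have hNO : 0 ≤ NO := l2opNorm_nonneg O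
  have hNA : 0 ≤ NA := l2opNorm_nonneg A
  have hNAp : 0 ≤ NAp := l2opNorm_nonneg Ap
  have hNP : l2opNorm P = NAp * NAp := by
    rw [hP, hNApdef]; exact l2opNorm_conjT_mul_self Ap
  rw [hNP] at hcluster
  have hcs : c ≤ NA * s := norm_toEuclideanLin_kron_one_le A ψ
  have hcne : ((c : ℂ)) ≠ 0 := Complex.ofReal_ne_zero.mpr hc0.ne'
  have hsne : ((s : ℂ)) ≠ 0 := Complex.ofReal_ne_zero.mpr hs0.ne'
  have factor : ((c : ℂ))⁻¹ ^ 2 * X - q * (((c : ℂ))⁻¹ ^ 2 * ((s : ℂ)) ^ 2) =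
      (((c : ℂ))⁻¹ ^ 2 * ((s : ℂ)) ^ 2) * (((s : ℂ))⁻¹ ^ 2 * X - q) := by
    field_simp
  rw [factor, norm_mul] at hcluster
  have habs : ‖((c : ℂ))⁻¹ ^ 2 * ((s : ℂ)) ^ 2‖ = c⁻¹ ^ 2 * s ^ 2 := by
    rw [norm_mul, norm_pow, norm_pow, norm_inv, Complex.norm_real,
      Complex.norm_real, Real.norm_of_nonneg hc0.le, Real.norm_of_nonneg hs0.le]
  rw [habs] at hcluster
  set D := ‖((s : ℂ))⁻¹ ^ 2 * X - q‖ with hDdef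
  have hD0 : 0 ≤ D := norm_nonneg _
  have h1 : D ≤ c ^ 2 / s ^ 2 * (ε * NO * (NAp * NAp)) := by
    have hmul := mul_le_mul_of_nonneg_left hcluster
      (le_of_lt (by positivity : (0 : ℝ) < c ^ 2 / s ^ 2))
    have hEq : c ^ 2 / s ^ 2 * (c⁻¹ ^ 2 * s ^ 2 * D) = D := by
      field_simp
    rwa [hEq] at hmul
  have h2 : c ^ 2 / s ^ 2 ≤ NA ^ 2 := by
    rw [div_le_iff₀ (by positivity)]
    nlinarith [hcs, hc0.le, hs0.le, hNA]
  have h3 : c ^ 2 / s ^ 2 * (ε * NO * (NAp * NAp)) ≤ NA ^ 2 * (ε * NO * (NAp * NAp)) :=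
    mul_le_mul_of_nonneg_right h2 (by positivity)
  calc D ≤ c ^ 2 / s ^ 2 * (ε * NO * (NAp * NAp)) := h1
    _ ≤ NA ^ 2 * (ε * NO * (NAp * NAp)) := h3
    _ = ε * NO * (NA * NAp) ^ 2 := by ring
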